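/- If a positive-area rectangle R is partitioned into finitely many rectangles R₁, …, Rₙ (with sides parallel to those of R), and f is any additive function on rectangles (additive under cutting by a line parallel to a side), then f(R) = f(R₁) + ⋯ + f(Rₙ). -/

import Mathlib

/-- An axis-parallel box in ℝⁿ with positive side lengths. -/
structure Box (n : ℕ) where
  lower : Fin n → ℝ
  upper : Fin n → ℝ
  lower_lt_upper : ∀ i, lower i < upper i

namespace Box

/-- The closed box as a subset of ℝⁿ. -/
def toSet {n : ℕ} (B : Box n) : Set (Fin n → ℝ) :=
  Set.univ.pi fun i => Set.Icc (B.lower i) (B.upper i)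

/-- The open interior of the box. -/
def interiorSet {n : ℕ} (B : Box n) : Set (Fin n → ℝ) :=
  Set.univ.pi fun i => Set.Ioo (B.lower i) (B.upper i)

/-- The side length of the box in direction `i`. -/
def side {n : ℕ} (B : Box n) (i : Fin n) : ℝ := B.upper i - B.lower i

end Box

/-- The boxes `t` form a finite partition (dissection) of `B`:
pairwise disjoint interiors, and their union covers `B`. -/
def IsDissection {n m : ℕ} (B : Box n) (t : Fin m → Box n) : Prop :=
  (∀ i j, i ≠ j → Disjoint (t i).interiorSet (t j).interiorSet) ∧
  (⋃ i, (t i).toSet) = B.toSet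

/-- `P` is cut by a hyperplane parallel to a pair of its faces into `P₁` and `P₂`. -/
def IsSplit {n : ℕ} (P P₁ P₂ : Box n) : Prop :=
  ∃ (j : Fin n) (c : ℝ), P.lower j < c ∧ c < P.upper j ∧
    P₁.lower = P.lower ∧ P₁.upper = Function.update P.upper j c ∧
    P₂.lower = Function.update P.lower j c ∧ P₂.upper = P.upper

lemma Box.ext_lem {n : ℕ} {B B' : Box n} (h1 : B.lower = B'.lower)
    (h2 : B.upper = B'.upper) : B = B' := by
  cases B; cases B'; simp_all

def strip (B : Box 2) (j : Fin 2) (x : ℕ → ℝ) (hx : StrictMono x) (k : ℕ) : Box 2 :=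
  ⟨Function.update B.lower j (x k), Function.update B.upper j (x (k+1)), by
    intro i
    rcases eq_or_ne i j with rfl | h
    · simpa using hx (Nat.lt_succ_self k)
    · simpa [Function.update_of_ne h] using B.lower_lt_upper i⟩

lemma strips_sum (f : Box 2 → ℝ)
    (hf : ∀ P P₁ P₂ : Box 2, IsSplit P P₁ P₂ → f P = f P₁ + f P₂)
    (j : Fin 2) (x : ℕ → ℝ) (hx : StrictMono x) :
    ∀ (p : ℕ) (B : Box 2), 0 < p → x 0 = B.lower j → x p = B.upper j →
      f B = ∑ k ∈ Finset.range p, f (strip B j x hx k) := by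
  intro p
  induction p with
  | zero => omega
  | succ n ih =>
    intro B _ h0 h1
    rcases Nat.eq_zero_or_pos n with rfl | hn
    · have hB : strip B j x hx 0 = B := by
        apply Box.ext_lem
        · rw [strip]; simp [h0]
        · rw [strip]; simp [h1]
      simp [hB]
    · have hlt0 : B.lower j < x n := by rw [← h0]; exact hx hn
      have hlt1 : x n < B.upper j := by rw [← h1]; exact hx (Nat.lt_succ_self n)
      set B₁ : Box 2 := ⟨B.lower, Function.update B.upper j (x n), by
        intro i
        rcases eq_or_ne i j with rfl | h
        · simpa using hlt0
        · simpa [Function.update_of_ne h] using B.lower_lt_upper i⟩ with hB₁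
      set B₂ : Box 2 := ⟨Function.update B.lower j (x n), B.upper, by
        intro i
        rcases eq_or_ne i j with rfl | h
        · simpa using hlt1
        · simpa [Function.update_of_ne h] using B.lower_lt_upper i⟩ with hB₂
      have hsplit : f B = f B₁ + f B₂ :=
        hf B B₁ B₂ ⟨j, x n, hlt0, hlt1, rfl, rfl, rfl, rfl⟩
      have hB₂eq : B₂ = strip B j x hx n := by
        apply Box.ext_lem
        · rfl
        · rw [strip]; simp [h1] <;> rfl
      have hIH : f B₁ = ∑ k ∈ Finset.range n, f (strip B₁ j x hx k) := by
        apply ih B₁ hn h0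
        simp [hB₁]
      have hstripeq : ∀ k, strip B₁ j x hx k = strip B j x hx k := by
        intro k
        apply Box.ext_lem
        · rfl
        · rw [strip, strip]; simp [hB₁, Function.update_idem]
      rw [Finset.sum_range_succ, ← hB₂eq, hsplit, hIH]
      congr 1
      exact Finset.sum_congr rfl fun k _ => by rw [hstripeq]

def cell (x y : ℕ → ℝ) (hx : StrictMono x) (hy : StrictMono y) (a b : ℕ) : Box 2 :=
  ⟨![x a, y b], ![x (a+1), y (b+1)], by
    intro i
    fin_cases i
    · simpa using hx (Nat.lt_succ_self a)
    · simpa using hy (Nat.lt_succ_self b)⟩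

lemma grid_sum (f : Box 2 → ℝ)
    (hf : ∀ P P₁ P₂ : Box 2, IsSplit P P₁ P₂ → f P = f P₁ + f P₂)
    (B : Box 2) (x y : ℕ → ℝ) (hx : StrictMono x) (hy : StrictMono y)
    (p q : ℕ) (hp : 0 < p) (hq : 0 < q)
    (hx0 : x 0 = B.lower 0) (hxp : x p = B.upper 0)
    (hy0 : y 0 = B.lower 1) (hyq : y q = B.upper 1) :
    f B = ∑ a ∈ Finset.range p, ∑ b ∈ Finset.range q, f (cell x y hx hy a b) := by
  rw [strips_sum f hf 0 x hx p B hp hx0 hxp]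
  refine Finset.sum_congr rfl fun a _ => ?_
  have h0 : y 0 = (strip B 0 x hx a).lower 1 := by
    rw [strip]; simp [hy0, Function.update_of_ne (by decide : (1 : Fin 2) ≠ 0)]
  have h1 : y q = (strip B 0 x hx a).upper 1 := by
    rw [strip]; simp [hyq, Function.update_of_ne (by decide : (1 : Fin 2) ≠ 0)]
  rw [strips_sum f hf 1 y hy q (strip B 0 x hx a) hq h0 h1]
  refine Finset.sum_congr rfl fun b _ => ?_
  congr 1
  apply Box.ext_lem
  · funext i
    fin_cases i <;>
      simp [strip, cell, Function.update_of_ne (by decide : (0 : Fin 2) ≠ 1)]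
  · funext i
    fin_cases i <;>
      simp [strip, cell, Function.update_of_ne (by decide : (0 : Fin 2) ≠ 1)]

lemma exists_enum (X : Finset ℝ) (hX : X.Nonempty) :
    ∃ x : ℕ → ℝ, StrictMono x ∧ (∀ v ∈ X, ∃ k, k < X.card ∧ x k = v) ∧
      (∀ k, k < X.card → x k ∈ X) := by
  have hcard : 0 < X.card := hX.card_pos
  set e := X.orderIsoOfFin rfl with he
  set M : ℝ := (e (⟨X.card - 1, by omega⟩ : Fin X.card) : ℝ) with hM
  refine ⟨fun k => if h : k < X.card then (e ⟨k, h⟩ : ℝ) else M + (k + 1 - X.card : ℕ),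
    ?_, ?_, ?_⟩
  · intro k l hkl
    have hle : ∀ (h : k < X.card) (h' : l < X.card),
        (e ⟨k, h⟩ : ℝ) < (e ⟨l, h'⟩ : ℝ) := by
      intro h h'
      exact_mod_cast e.strictMono (show (⟨k, h⟩ : Fin X.card) < ⟨l, h'⟩ from hkl)
    have hMax : ∀ (h : k < X.card), (e ⟨k, h⟩ : ℝ) ≤ M := by
      intro h
      exact_mod_cast e.monotone (show (⟨k, h⟩ : Fin X.card) ≤ (⟨X.card - 1, by omega⟩ : Fin X.card) from
        by simp only [Fin.le_def]; omega)
    simp only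
    by_cases hk : k < X.card <;> by_cases hl : l < X.card
    · rw [dif_pos hk, dif_pos hl]; exact hle hk hl
    · rw [dif_pos hk, dif_neg hl]
      have h1 : (1 : ℝ) ≤ ((l + 1 - X.card : ℕ) : ℝ) := by
        have : 1 ≤ l + 1 - X.card := by omega
        exact_mod_cast this
      have := hMax hk
      linarith
    · omega
    · rw [dif_neg hk, dif_neg hl]
      have : ((k + 1 - X.card : ℕ) : ℝ) < ((l + 1 - X.card : ℕ) : ℝ) := by
        have : k + 1 - X.card < l + 1 - X.card := by omega
        exact_mod_cast this
      linarith
  · intro v hv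
    obtain ⟨a, ha⟩ := e.surjective ⟨v, hv⟩
    refine ⟨a.1, a.2, ?_⟩
    simp only [dif_pos a.2, Fin.eta, ha]
  · intro k hk
    simp only [dif_pos hk]
    exact (e ⟨k, hk⟩).2


/-- Any function on rectangles that is additive under cutting by a line parallel to a
side sums correctly over any finite partition into rectangles. -/
theorem additive_function_sums_over_partition (f : Box 2 → ℝ)
    (hf : ∀ P P₁ P₂ : Box 2, IsSplit P P₁ P₂ → f P = f P₁ + f P₂)
    (R : Box 2) (m : ℕ) (t : Fin m → Box 2) (ht : IsDissection R t) :
    f R = ∑ i, f (t i) := by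
  classical
  obtain ⟨hdisj, hcover⟩ := ht
  have hmem_to : ∀ (B : Box 2) (z : Fin 2 → ℝ),
      z ∈ B.toSet ↔ ∀ k, B.lower k ≤ z k ∧ z k ≤ B.upper k := by
    intro B z; simp only [Box.toSet, Set.mem_univ_pi, Set.mem_Icc]
  have hmem_int : ∀ (B : Box 2) (z : Fin 2 → ℝ),
      z ∈ B.interiorSet ↔ ∀ k, B.lower k < z k ∧ z k < B.upper k := by
    intro B z; simp only [Box.interiorSet, Set.mem_univ_pi, Set.mem_Ioo]
  have hsub : ∀ i, (t i).toSet ⊆ R.toSet := by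
    intro i; rw [← hcover]; exact Set.subset_iUnion (fun i => (t i).toSet) i
  have hcorner : ∀ i k, R.lower k ≤ (t i).lower k ∧ (t i).upper k ≤ R.upper k := by
    intro i k
    have hl : (t i).lower ∈ (t i).toSet :=
      (hmem_to _ _).2 fun k => ⟨le_refl _, le_of_lt ((t i).lower_lt_upper k)⟩
    have hu : (t i).upper ∈ (t i).toSet :=
      (hmem_to _ _).2 fun k => ⟨le_of_lt ((t i).lower_lt_upper k), le_refl _⟩
    exact ⟨((hmem_to R _).1 (hsub i hl) k).1, ((hmem_to R _).1 (hsub i hu) k).2⟩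
  set X : Finset ℝ := insert (R.lower 0) (insert (R.upper 0)
    ((Finset.univ.image fun i => (t i).lower 0) ∪
      (Finset.univ.image fun i => (t i).upper 0))) with hXdef
  set Y : Finset ℝ := insert (R.lower 1) (insert (R.upper 1)
    ((Finset.univ.image fun i => (t i).lower 1) ∪
      (Finset.univ.image fun i => (t i).upper 1))) with hYdef
  have hXb : ∀ v ∈ X, R.lower 0 ≤ v ∧ v ≤ R.upper 0 := by
    intro v hv
    simp only [hXdef, Finset.mem_insert, Finset.mem_union, Finset.mem_image,
      Finset.mem_univ, true_and] at hv
    rcases hv with rfl | rfl | ⟨i, rfl⟩ | ⟨i, rfl⟩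
    · exact ⟨le_refl _, le_of_lt (R.lower_lt_upper 0)⟩
    · exact ⟨le_of_lt (R.lower_lt_upper 0), le_refl _⟩
    · exact ⟨(hcorner i 0).1, le_trans (le_of_lt ((t i).lower_lt_upper 0)) (hcorner i 0).2⟩
    · exact ⟨le_trans (hcorner i 0).1 (le_of_lt ((t i).lower_lt_upper 0)), (hcorner i 0).2⟩
  have hYb : ∀ v ∈ Y, R.lower 1 ≤ v ∧ v ≤ R.upper 1 := by
    intro v hv
    simp only [hYdef, Finset.mem_insert, Finset.mem_union, Finset.mem_image,
      Finset.mem_univ, true_and] at hv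
    rcases hv with rfl | rfl | ⟨i, rfl⟩ | ⟨i, rfl⟩
    · exact ⟨le_refl _, le_of_lt (R.lower_lt_upper 1)⟩
    · exact ⟨le_of_lt (R.lower_lt_upper 1), le_refl _⟩
    · exact ⟨(hcorner i 1).1, le_trans (le_of_lt ((t i).lower_lt_upper 1)) (hcorner i 1).2⟩
    · exact ⟨le_trans (hcorner i 1).1 (le_of_lt ((t i).lower_lt_upper 1)), (hcorner i 1).2⟩
  obtain ⟨x, hx, hxsurj, hxmem⟩ := exists_enum X ⟨R.lower 0, by simp [hXdef]⟩
  obtain ⟨y, hy, hysurj, hymem⟩ := exists_enum Y ⟨R.lower 1, by simp [hYdef]⟩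
  have hX2 : 1 < X.card := Finset.one_lt_card.2
    ⟨R.lower 0, by simp [hXdef], R.upper 0, by simp [hXdef], ne_of_lt (R.lower_lt_upper 0)⟩
  have hY2 : 1 < Y.card := Finset.one_lt_card.2
    ⟨R.lower 1, by simp [hYdef], R.upper 1, by simp [hYdef], ne_of_lt (R.lower_lt_upper 1)⟩
  set p := X.card - 1 with hpdef
  set q := Y.card - 1 with hqdef
  have hp0 : 0 < p := by omega
  have hq0 : 0 < q := by omega
  have hx0 : x 0 = R.lower 0 := by
    obtain ⟨k, hk, hkv⟩ := hxsurj (R.lower 0) (by simp [hXdef])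
    exact le_antisymm (hkv ▸ hx.monotone (Nat.zero_le k)) (hXb _ (hxmem 0 (by omega))).1
  have hxp : x p = R.upper 0 := by
    obtain ⟨k, hk, hkv⟩ := hxsurj (R.upper 0) (by simp [hXdef])
    exact le_antisymm (hXb _ (hxmem p (by omega))).2 (hkv ▸ hx.monotone (by omega))
  have hy0 : y 0 = R.lower 1 := by
    obtain ⟨k, hk, hkv⟩ := hysurj (R.lower 1) (by simp [hYdef])
    exact le_antisymm (hkv ▸ hy.monotone (Nat.zero_le k)) (hYb _ (hymem 0 (by omega))).1
  have hyq : y q = R.upper 1 := by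
    obtain ⟨k, hk, hkv⟩ := hysurj (R.upper 1) (by simp [hYdef])
    exact le_antisymm (hYb _ (hymem q (by omega))).2 (hkv ▸ hy.monotone (by omega))
  have hAB : ∀ i, ∃ a₀ a₁, a₀ < a₁ ∧ a₁ ≤ p ∧
      x a₀ = (t i).lower 0 ∧ x a₁ = (t i).upper 0 := by
    intro i
    obtain ⟨a₀, ha₀p, ha₀⟩ := hxsurj ((t i).lower 0) (by simp [hXdef])
    obtain ⟨a₁, ha₁p, ha₁⟩ := hxsurj ((t i).upper 0) (by simp [hXdef])
    refine ⟨a₀, a₁, ?_, by omega, ha₀, ha₁⟩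
    exact hx.lt_iff_lt.1 (by rw [ha₀, ha₁]; exact (t i).lower_lt_upper 0)
  choose A0 A1 hA01 hA1p hA0v hA1v using hAB
  have hCD : ∀ i, ∃ b₀ b₁, b₀ < b₁ ∧ b₁ ≤ q ∧
      y b₀ = (t i).lower 1 ∧ y b₁ = (t i).upper 1 := by
    intro i
    obtain ⟨b₀, hb₀q, hb₀⟩ := hysurj ((t i).lower 1) (by simp [hYdef])
    obtain ⟨b₁, hb₁q, hb₁⟩ := hysurj ((t i).upper 1) (by simp [hYdef])
    refine ⟨b₀, b₁, ?_, by omega, hb₀, hb₁⟩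
    exact hy.lt_iff_lt.1 (by rw [hb₀, hb₁]; exact (t i).lower_lt_upper 1)
  choose C0 C1 hC01 hC1q hC0v hC1v using hCD
  set S : Fin m → Finset (ℕ × ℕ) :=
    fun i => Finset.Ico (A0 i) (A1 i) ×ˢ Finset.Ico (C0 i) (C1 i) with hSdef
  set mpt : ℕ → ℕ → (Fin 2 → ℝ) :=
    fun a b => ![(x a + x (a+1))/2, (y b + y (b+1))/2] with hmptdef
  have hm0 : ∀ a b, mpt a b 0 = (x a + x (a+1))/2 := fun a b => rfl
  have hm1 : ∀ a b, mpt a b 1 = (y b + y (b+1))/2 := fun a b => rfl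
  have hxstep : ∀ a, x a < mpt a 0 0 ∧ mpt a 0 0 < x (a+1) := by
    intro a
    have := hx (Nat.lt_succ_self a)
    rw [hm0]; constructor <;> linarith
  have hystep : ∀ b, y b < mpt 0 b 1 ∧ mpt 0 b 1 < y (b+1) := by
    intro b
    have := hy (Nat.lt_succ_self b)
    rw [hm1]; constructor <;> linarith
  have hm0' : ∀ a b, x a < mpt a b 0 ∧ mpt a b 0 < x (a+1) := fun a b => hxstep a
  have hm1' : ∀ a b, y b < mpt a b 1 ∧ mpt a b 1 < y (b+1) := fun a b => hystep b
  -- membership in S i implies midpoint interior to t i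
  have hmid_int : ∀ i a b, (a, b) ∈ S i → mpt a b ∈ (t i).interiorSet := by
    intro i a b hab
    simp only [hSdef, Finset.mem_product, Finset.mem_Ico] at hab
    obtain ⟨⟨h1, h2⟩, h3, h4⟩ := hab
    rw [hmem_int, Fin.forall_fin_two]
    refine ⟨⟨?_, ?_⟩, ?_, ?_⟩
    · rw [← hA0v i]
      exact lt_of_le_of_lt (hx.monotone h1) (hm0' a b).1
    · rw [← hA1v i]
      exact lt_of_lt_of_le (hm0' a b).2 (hx.monotone h2)
    · rw [← hC0v i]
      exact lt_of_le_of_lt (hy.monotone h3) (hm1' a b).1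
    · rw [← hC1v i]
      exact lt_of_lt_of_le (hm1' a b).2 (hy.monotone h4)
  -- midpoint in closed t i implies membership in S i
  have hmid_to : ∀ i a b, mpt a b ∈ (t i).toSet → (a, b) ∈ S i := by
    intro i a b hab
    rw [hmem_to] at hab
    have h0 := hab 0
    have h1 := hab 1
    rw [← hA0v i, ← hA1v i] at h0
    rw [← hC0v i, ← hC1v i] at h1
    simp only [hSdef, Finset.mem_product, Finset.mem_Ico]
    have ha1 : x (A0 i) < x (a+1) := lt_of_le_of_lt h0.1 (hm0' a b).2
    have ha2 : x a < x (A1 i) := lt_of_lt_of_le (hm0' a b).1 h0.2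
    have hb1 : y (C0 i) < y (b+1) := lt_of_le_of_lt h1.1 (hm1' a b).2
    have hb2 : y b < y (C1 i) := lt_of_lt_of_le (hm1' a b).1 h1.2
    have := hx.lt_iff_lt.1 ha1
    have := hx.lt_iff_lt.1 ha2
    have := hy.lt_iff_lt.1 hb1
    have := hy.lt_iff_lt.1 hb2
    omega
  -- cover
  have hcover' : Finset.range p ×ˢ Finset.range q = Finset.univ.biUnion S := by
    apply Finset.ext
    rintro ⟨a, b⟩
    simp only [Finset.mem_product, Finset.mem_range, Finset.mem_biUnion,
      Finset.mem_univ, true_and]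
    constructor
    · rintro ⟨ha, hb⟩
      have hmem : mpt a b ∈ R.toSet := by
        rw [hmem_to, Fin.forall_fin_two]
        have hxa : x 0 ≤ x a := hx.monotone (Nat.zero_le a)
        have hxa1 : x (a+1) ≤ x p := hx.monotone (by omega)
        have hyb : y 0 ≤ y b := hy.monotone (Nat.zero_le b)
        have hyb1 : y (b+1) ≤ y q := hy.monotone (by omega)
        rw [hx0] at hxa; rw [hxp] at hxa1; rw [hy0] at hyb; rw [hyq] at hyb1
        have h1 := hm0' a b
        have h2 := hm1' a b
        exact ⟨⟨by linarith, by linarith⟩, by linarith, by linarith⟩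
      rw [← hcover] at hmem
      obtain ⟨s, ⟨i, rfl⟩, hmem⟩ := hmem
      exact ⟨i, hmid_to i a b hmem⟩
    · rintro ⟨i, hab⟩
      simp only [hSdef, Finset.mem_product, Finset.mem_Ico] at hab
      constructor
      · have := hA1p i; omega
      · have := hC1q i; omega
  -- disjointness
  have hSdisj : (↑(Finset.univ : Finset (Fin m)) : Set (Fin m)).PairwiseDisjoint S := by
    intro i _ j _ hij
    rw [Function.onFun, Finset.disjoint_left]
    rintro ⟨a, b⟩ hi hj
    have h1 := hmid_int i a b hi
    have h2 := hmid_int j a b hj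
    exact Set.disjoint_left.1 (hdisj i j hij) h1 h2
  -- per-box sum
  have hbox : ∀ i, f (t i) = ∑ ab ∈ S i, f (cell x y hx hy ab.1 ab.2) := by
    intro i
    have hx' : StrictMono fun k => x (A0 i + k) := fun a b h => hx (by omega)
    have hy' : StrictMono fun l => y (C0 i + l) := fun a b h => hy (by omega)
    have e1 : (fun k => x (A0 i + k)) 0 = (t i).lower 0 := by
      simp only [Nat.add_zero]; exact hA0v i
    have e2 : (fun k => x (A0 i + k)) (A1 i - A0 i) = (t i).upper 0 := by
      simp only [Nat.add_sub_cancel' (le_of_lt (hA01 i))]; exact hA1v i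
    have e3 : (fun l => y (C0 i + l)) 0 = (t i).lower 1 := by
      simp only [Nat.add_zero]; exact hC0v i
    have e4 : (fun l => y (C0 i + l)) (C1 i - C0 i) = (t i).upper 1 := by
      simp only [Nat.add_sub_cancel' (le_of_lt (hC01 i))]; exact hC1v i
    have h := grid_sum f hf (t i) _ _ hx' hy' (A1 i - A0 i) (C1 i - C0 i)
      (by have := hA01 i; omega) (by have := hC01 i; omega) e1 e2 e3 e4
    have hcelleq : ∀ k l,
        cell (fun k => x (A0 i + k)) (fun l => y (C0 i + l)) hx' hy' k l
          = cell x y hx hy (A0 i + k) (C0 i + l) := fun k l => rfl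
    rw [h, hSdef]
    rw [Finset.sum_product]
    rw [Finset.sum_Ico_eq_sum_range]
    refine Finset.sum_congr rfl fun k _ => ?_
    rw [Finset.sum_Ico_eq_sum_range]
    refine Finset.sum_congr rfl fun l _ => ?_
    rw [hcelleq]
  -- final computation
  rw [grid_sum f hf R x y hx hy p q hp0 hq0 hx0 hxp hy0 hyq]
  rw [← Finset.sum_product']
  rw [hcover', Finset.sum_biUnion hSdisj]
  exact Finset.sum_congr rfl fun i _ => (hbox i).symm
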